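/- arXiv:1112.5295 — 2 statements merged into one kernel-verified Lean document; each statement's English description precedes it below -/
import Mathlib

section
/- Let A and B be Hermitian operators on a finite-dimensional Hilbert space. Then for all real t, ‖e^{it(A+B)} e^{−itB} − 1‖ ≤ |t| · ‖A‖, where ‖·‖ is the operator norm. -/
open NormedSpace
open scoped Matrix.Norms.L2Operator

/-- For Hermitian `A`, `B`: `‖e^{it(A+B)} e^{−itB} − 1‖ ≤ |t|·‖A‖`. -/
theorem norm_exp_mul_exp_sub_one_le
    {n : Type*} [Fintype n] [DecidableEq n]
    (A B : Matrix n n ℂ) (hA : A.IsHermitian) (hB : B.IsHermitian) (t : ℝ) :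
    ‖exp ((t : ℂ) • Complex.I • (A + B)) *
        exp (-((t : ℂ) • Complex.I • B)) - 1‖ ≤ |t| * ‖A‖ := by
  set M₁ : Matrix n n ℂ := Complex.I • (A + B) with hM₁
  set M₂ : Matrix n n ℂ := -(Complex.I • B) with hM₂
  -- skew-adjointness
  have hskew₁ : ∀ s : ℝ, s • M₁ ∈ skewAdjoint (Matrix n n ℂ) := by
    intro s
    rw [skewAdjoint.mem_iff]
    simp only [hM₁, Matrix.star_eq_conjTranspose, Matrix.conjTranspose_smul, star_smul,
      Matrix.conjTranspose_add, hA.eq, hB.eq, star_trivial, Complex.star_def, Complex.conj_I, neg_smul,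
      smul_add, smul_neg, neg_neg, neg_add_rev]
    abel
  have hskew₂ : ∀ s : ℝ, s • M₂ ∈ skewAdjoint (Matrix n n ℂ) := by
    intro s
    rw [skewAdjoint.mem_iff]
    simp only [hM₂, Matrix.star_eq_conjTranspose, Matrix.conjTranspose_smul, star_smul, star_neg,
      hB.eq, star_trivial, Complex.star_def, Complex.conj_I, neg_smul, smul_neg, neg_neg]
  have hU : ∀ (M : Matrix n n ℂ) (s : ℝ), s • M ∈ skewAdjoint (Matrix n n ℂ) →
      exp (s • M) ∈ unitary (Matrix n n ℂ) := by
    intro M s hs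
    let +nondep : NormedAlgebra ℚ (Matrix n n ℂ) := .restrictScalars ℚ ℂ _
    exact exp_mem_unitary_of_mem_skewAdjoint hs
  have hadd : M₁ + M₂ = Complex.I • A := by
    rw [hM₁, hM₂, smul_add]
    abel
  -- the function and its derivative
  set f : ℝ → Matrix n n ℂ := fun s => exp (s • M₁) * exp (s • M₂) with hf
  have hderiv : ∀ s : ℝ,
      HasDerivAt f (exp (s • M₁) * (Complex.I • A) * exp (s • M₂)) s := by
    intro s
    have h₁ := hasDerivAt_exp_smul_const (𝕂 := ℝ) M₁ s
    have h₂ := hasDerivAt_exp_smul_const (𝕂 := ℝ) M₂ s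
    have key := h₁.mul h₂
    convert key using 1
    · rfl
    · rfl
    · rfl
    · rfl
    have hc : Commute M₂ (exp (s • M₂)) :=
      (((Commute.refl M₂).smul_right s).exp_right)
    calc exp (s • M₁) * (Complex.I • A) * exp (s • M₂)
        = exp (s • M₁) * ((M₁ + M₂) * exp (s • M₂)) := by
          rw [hadd, mul_assoc]
      _ = exp (s • M₁) * M₁ * exp (s • M₂)
            + exp (s • M₁) * (M₂ * exp (s • M₂)) := by
          noncomm_ring
      _ = exp (s • M₁) * M₁ * exp (s • M₂)
            + exp (s • M₁) * (exp (s • M₂) * M₂) := by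
          rw [hc.eq]
  -- bound on the derivative
  have hbound : ∀ s : ℝ, ‖exp (s • M₁) * (Complex.I • A) * exp (s • M₂)‖ ≤ ‖A‖ := by
    intro s
    rw [CStarRing.norm_mul_mem_unitary _ (hU M₂ s (hskew₂ s)),
      CStarRing.norm_mem_unitary_mul _ (hU M₁ s (hskew₁ s)), norm_smul]
    simp
  -- rewrite the goal
  have e₁ : (t : ℂ) • M₁ = (t : ℝ) • M₁ := Complex.coe_smul t M₁
  have e₂ : -((t : ℂ) • (Complex.I • B)) = (t : ℝ) • M₂ := by
    rw [hM₂, smul_neg, Complex.coe_smul]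
  rw [e₁, e₂]
  -- mean value inequality on ℝ
  have key : ‖f t - f 0‖ ≤ ‖A‖ * ‖t - (0 : ℝ)‖ :=
    Convex.norm_image_sub_le_of_norm_hasDerivWithin_le
      (f := f) (f' := fun s => exp (s • M₁) * (Complex.I • A) * exp (s • M₂))
      (s := Set.univ) (fun x _ => (hderiv x).hasDerivWithinAt)
      (fun x _ => hbound x) convex_univ trivial trivial
  have hf0 : f 0 = 1 := by simp [hf, exp_zero]
  have hft : f t = exp ((t : ℝ) • M₁) * exp ((t : ℝ) • M₂) := rfl
  calc ‖exp ((t:ℝ) • M₁) * exp ((t:ℝ) • M₂) - 1‖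
      = ‖f t - f 0‖ := by rw [hft, hf0]
    _ ≤ ‖A‖ * ‖t - (0 : ℝ)‖ := key
    _ = |t| * ‖A‖ := by rw [sub_zero, Real.norm_eq_abs, mul_comm]
end

section
/- Let L = A ∪ C be a partition of the index set, with H = Σ_{i∈L} h_i and H_A = Σ_{i∈A} h_i, where the h_i satisfy ⟨h_i⟩ = 0, ‖h_i‖ ≤ h, and ⟨h_i h_j⟩ = 0 for dist(i,j) > 2R. Then |σ² − σ_A²| ≤ 3 h² β_{2R} |C|, where σ² = ⟨H²⟩, σ_A² = ⟨H_A²⟩, and β_{2R} = max_j |{i : dist(i,j) ≤ 2R}|. -/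
open scoped Matrix.Norms.L2Operator
open Matrix

lemma euclid_coord_le {n : Type*} [Fintype n] [DecidableEq n]
    (v : EuclideanSpace ℂ n) (i : n) : ‖v i‖ ≤ ‖v‖ := by
  have h1 := norm_inner_le_norm (𝕜 := ℂ) (EuclideanSpace.single i (1:ℂ)) v
  rw [EuclideanSpace.inner_single_left, EuclideanSpace.norm_single] at h1
  simpa using h1

lemma diag_le_norm {n : Type*} [Fintype n] [DecidableEq n]
    (M : Matrix n n ℂ) (i : n) : ‖M i i‖ ≤ ‖M‖ := by
  have h1 := M.l2_opNorm_mulVec (EuclideanSpace.single i (1:ℂ))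
  rw [EuclideanSpace.norm_single] at h1
  have h2 := euclid_coord_le ((EuclideanSpace.equiv n ℂ).symm (M *ᵥ EuclideanSpace.single i (1:ℂ))) i
  have h3 : ((EuclideanSpace.equiv n ℂ).symm (M *ᵥ EuclideanSpace.single i (1:ℂ))) i = M i i := by
    simp [Matrix.mulVec, dotProduct, EuclideanSpace.single_apply]
  rw [h3] at h2
  calc ‖M i i‖ = ‖M i i‖ := rfl
    _ ≤ _ := h2.trans (h1.trans_eq (by simp))

lemma trace_div_re_abs_le {n : Type*} [Fintype n] [DecidableEq n] [Nonempty n]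
    (M : Matrix n n ℂ) : |(M.trace / (Fintype.card n : ℂ)).re| ≤ ‖M‖ := by
  have hc : (0:ℝ) < Fintype.card n := by positivity
  have h1 : |(M.trace / (Fintype.card n : ℂ)).re| ≤ ‖M.trace / (Fintype.card n : ℂ)‖ :=
    Complex.abs_re_le_norm _
  rw [norm_div, Complex.norm_natCast] at h1
  refine h1.trans ?_
  rw [div_le_iff₀ hc]
  have : ‖M.trace‖ ≤ ∑ i, ‖M i i‖ := by
    apply norm_sum_le
  refine this.trans ?_
  calc ∑ i, ‖M i i‖ ≤ ∑ _i : n, ‖M‖ := Finset.sum_le_sum fun i _ => diag_le_norm M i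
    _ = ‖M‖ * Fintype.card n := by simp [mul_comm]

open Finset in
lemma abs_double_sum_le {α : Type*} [DecidableEq α] (S T : Finset α) (f : α → α → ℝ)
    (M : ℝ) (hM : 0 ≤ M) (b : ℕ)
    (hf : ∀ i ∈ S, ∀ j ∈ T, |f i j| ≤ M)
    (hz : ∀ j ∈ T, (S.filter fun i => f i j ≠ 0).card ≤ b) :
    |∑ j ∈ T, ∑ i ∈ S, f i j| ≤ M * b * T.card := by
  classical
  calc |∑ j ∈ T, ∑ i ∈ S, f i j| ≤ ∑ j ∈ T, |∑ i ∈ S, f i j| := Finset.abs_sum_le_sum_abs _ _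
    _ ≤ ∑ _j ∈ T, M * b := by
        refine Finset.sum_le_sum fun j hj => ?_
        have e1 : ∑ i ∈ S, f i j = ∑ i ∈ S.filter fun i => f i j ≠ 0, f i j :=
          (Finset.sum_filter_ne_zero S).symm
        rw [e1]
        calc |∑ i ∈ S.filter fun i => f i j ≠ 0, f i j|
            ≤ ∑ i ∈ S.filter fun i => f i j ≠ 0, |f i j| := Finset.abs_sum_le_sum_abs _ _
          _ ≤ ∑ _i ∈ S.filter fun i => f i j ≠ 0, M :=
              Finset.sum_le_sum fun i hi => hf i (Finset.mem_of_mem_filter i hi) j hj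
          _ = (S.filter fun i => f i j ≠ 0).card * M := by simp [mul_comm]
          _ ≤ M * b := by
              rw [mul_comm]
              exact mul_le_mul_of_nonneg_left (by exact_mod_cast hz j hj) hM
    _ = M * b * T.card := by simp [mul_comm]


/-- For a partition `L = A ∪ C` and `H = Σ_{i∈L} h_i`, `H_A = Σ_{i∈A} h_i`,
with `⟨h_i⟩ = 0`, `‖h_i‖ ≤ h`, `⟨h_i h_j⟩ = 0` for `dist i j > 2R`, one has
`|σ² − σ_A²| ≤ 3h²β_{2R}|C|` with `σ² = ⟨H²⟩`, `σ_A² = ⟨H_A²⟩`. -/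
theorem variance_difference_le
    {L : Type*} [Fintype L] [MetricSpace L] [DecidableEq L]
    {n : Type*} [Fintype n] [DecidableEq n] [Nonempty n]
    (hop : L → Matrix n n ℂ) (hherm : ∀ i, (hop i).IsHermitian)
    (h R : ℝ) (hR : 0 < R)
    (hmean : ∀ i, (hop i).trace / (Fintype.card n : ℂ) = 0)
    (hnorm : ∀ i, ‖hop i‖ ≤ h)
    (hdecor : ∀ i j, 2 * R < dist i j → (hop i * hop j).trace = 0)
    (A C : Finset L) (hdisj : Disjoint A C) (hunion : A ∪ C = Finset.univ) :
    |(((∑ i : L, hop i) * (∑ i : L, hop i)).trace / (Fintype.card n : ℂ)).re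
        - (((∑ i ∈ A, hop i) * (∑ i ∈ A, hop i)).trace / (Fintype.card n : ℂ)).re|
      ≤ 3 * h ^ 2 *
        ((Finset.univ.sup fun j : L => {i : L | dist i j ≤ 2 * R}.ncard : ℕ) : ℝ) *
        C.card := by
  classical
  set c : ℂ := (Fintype.card n : ℂ) with hc
  set β : ℕ := Finset.univ.sup fun j : L => {i : L | dist i j ≤ 2 * R}.ncard with hβ
  set t : L → L → ℝ := fun i j => ((hop i * hop j).trace / c).re with ht
  -- per-pair bound
  have hpair : ∀ i j, |t i j| ≤ h ^ 2 := by
    intro i j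
    have := trace_div_re_abs_le (hop i * hop j)
    refine this.trans ?_
    have h0i : (0:ℝ) ≤ ‖hop i‖ := norm_nonneg _
    have hh : 0 ≤ h := h0i.trans (hnorm i)
    calc ‖hop i * hop j‖ ≤ ‖hop i‖ * ‖hop j‖ := Matrix.l2_opNorm_mul _ _
      _ ≤ h * h := mul_le_mul (hnorm i) (hnorm j) (norm_nonneg _) hh
      _ = h ^ 2 := (sq h).symm
  have hM : (0:ℝ) ≤ h ^ 2 := sq_nonneg h
  -- counting bound
  have hcount : ∀ j : L, ∀ S : Finset L,
      (S.filter fun i => t i j ≠ 0).card ≤ β := by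
    intro j S
    have hsub : (S.filter fun i => t i j ≠ 0) ⊆ Finset.univ.filter fun i => dist i j ≤ 2 * R := by
      intro i hi
      rw [Finset.mem_filter] at hi ⊢
      refine ⟨Finset.mem_univ _, ?_⟩
      by_contra hgt
      exact hi.2 (by simp [ht, hdecor i j (lt_of_not_ge hgt)])
    refine (Finset.card_le_card hsub).trans ?_
    have : (Finset.univ.filter fun i => dist i j ≤ 2 * R).card
        = ({i : L | dist i j ≤ 2 * R}).ncard := by
      rw [Set.ncard_eq_toFinset_card', Set.toFinset_setOf]
    rw [this]
    exact Finset.le_sup (f := fun j : L => {i : L | dist i j ≤ 2 * R}.ncard) (Finset.mem_univ j)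
  -- counting for transposed version
  have hcount' : ∀ j : L, ∀ S : Finset L,
      (S.filter fun i => t j i ≠ 0).card ≤ β := by
    intro j S
    have hsub : (S.filter fun i => t j i ≠ 0) ⊆ Finset.univ.filter fun i => dist i j ≤ 2 * R := by
      intro i hi
      rw [Finset.mem_filter] at hi ⊢
      refine ⟨Finset.mem_univ _, ?_⟩
      by_contra hgt
      rw [dist_comm] at hgt
      exact hi.2 (by simp [ht, hdecor j i (lt_of_not_ge hgt)])
    refine (Finset.card_le_card hsub).trans ?_
    have : (Finset.univ.filter fun i => dist i j ≤ 2 * R).card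
        = ({i : L | dist i j ≤ 2 * R}).ncard := by
      rw [Set.ncard_eq_toFinset_card', Set.toFinset_setOf]
    rw [this]
    exact Finset.le_sup (f := fun j : L => {i : L | dist i j ≤ 2 * R}.ncard) (Finset.mem_univ j)
  -- expansion of products into double sums
  have key : ∀ S T : Finset L, (((∑ i ∈ S, hop i) * (∑ j ∈ T, hop j)).trace / c).re
      = ∑ j ∈ T, ∑ i ∈ S, t i j := by
    intro S T
    rw [Finset.sum_mul_sum, Finset.sum_comm]
    simp [ht, Matrix.trace_sum, Finset.sum_div, Complex.re_sum]
  have expand : (((∑ i : L, hop i) * (∑ i : L, hop i)).trace / c).re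
      - (((∑ i ∈ A, hop i) * (∑ i ∈ A, hop i)).trace / c).re
      = (∑ j ∈ C, ∑ i ∈ A, t i j) + (∑ j ∈ A, ∑ i ∈ C, t i j) + (∑ j ∈ C, ∑ i ∈ C, t i j) := by
    have : (∑ i : L, hop i) = (∑ i ∈ A, hop i) + (∑ i ∈ C, hop i) := by
      rw [← Finset.sum_union hdisj, hunion]
    rw [this]
    simp only [add_mul, mul_add, Matrix.trace_add, add_div, Complex.add_re, key]
    ring
  rw [expand]
  have b1 : |∑ j ∈ C, ∑ i ∈ A, t i j| ≤ h ^ 2 * β * C.card :=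
    abs_double_sum_le A C t (h ^ 2) hM β (fun i _ j _ => hpair i j) (fun j _ => hcount j A)
  have b3 : |∑ j ∈ C, ∑ i ∈ C, t i j| ≤ h ^ 2 * β * C.card :=
    abs_double_sum_le C C t (h ^ 2) hM β (fun i _ j _ => hpair i j) (fun j _ => hcount j C)
  have b2 : |∑ j ∈ A, ∑ i ∈ C, t i j| ≤ h ^ 2 * β * C.card := by
    have e : ∑ j ∈ A, ∑ i ∈ C, t i j = ∑ j ∈ C, ∑ i ∈ A, (fun a b => t b a) i j :=
      Finset.sum_comm
    rw [e]
    exact abs_double_sum_le A C (fun a b => t b a) (h ^ 2) hM β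
      (fun i _ j _ => hpair j i) (fun j _ => hcount' j A)
  calc |(∑ j ∈ C, ∑ i ∈ A, t i j) + (∑ j ∈ A, ∑ i ∈ C, t i j) + (∑ j ∈ C, ∑ i ∈ C, t i j)|
      ≤ |∑ j ∈ C, ∑ i ∈ A, t i j| + |∑ j ∈ A, ∑ i ∈ C, t i j| + |∑ j ∈ C, ∑ i ∈ C, t i j| :=
        (abs_add_le _ _).trans (by gcongr; exact abs_add_le _ _)
    _ ≤ h ^ 2 * β * C.card + h ^ 2 * β * C.card + h ^ 2 * β * C.card := by
        exact add_le_add (add_le_add b1 b2) b3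
    _ = 3 * h ^ 2 * (β : ℝ) * C.card := by ring
end
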